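/- If K is a Dita-type complex Hadamard matrix of order N = nk built from a k×k matrix M and n×n matrices N_1,...,N_k, then the log-matrix log K admits a partition of the N column indices into k sets I_1,...,I_k of size n, and a partition of the rows into n groups of k rows each, such that within each group any two rows are I_m-equivalent for every m = 1,...,k (i.e. the rows in each group are (k)-n-equivalent). -/

import Mathlib

open Matrix Complex Real

/-- A complex Hadamard matrix: all entries unimodular and rows pairwise orthogonal. -/
def IsCHadamard {ι : Type*} [Fintype ι] [DecidableEq ι] (H : Matrix ι ι ℂ) : Prop :=
  (∀ i j, ‖H i j‖ = 1) ∧ H * Hᴴ = (Fintype.card ι : ℂ) • 1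

lemma fract_eq_of_exp_eq {x y : ℝ}
    (h : Complex.exp (2 * π * Complex.I * (x : ℂ)) = Complex.exp (2 * π * Complex.I * (y : ℂ))) :
    Int.fract x = Int.fract y := by
  rw [Complex.exp_eq_exp_iff_exists_int] at h
  obtain ⟨m, hm⟩ := h
  have h2 : (2 * π * Complex.I) ≠ 0 := by
    simp [Real.pi_ne_zero, Complex.I_ne_zero]
  have hx : (x : ℂ) = (y : ℂ) + (m : ℂ) := by
    have : 2 * π * Complex.I * (x : ℂ) = 2 * π * Complex.I * ((y : ℂ) + m) := by
      rw [hm]; ring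
    exact mul_left_cancel₀ h2 this
  have : x = y + m := by exact_mod_cast hx
  rw [this, Int.fract_add_intCast]

/-- The log-matrix of a Dita-type matrix has a regular structure: with columns
partitioned into the `k` blocks `I_m = {(m,b) : b}` of size `n` and rows grouped
into the `n` groups `R_j = {(i,j) : i}` of `k` rows each, any two rows in a fixed
group are `I_m`-equivalent for every `m` (i.e. the rows of each group are
pairwise `(k)`-`n`-equivalent). -/
theorem dita_type_log_structure (k n : ℕ)
    (M : Matrix (Fin k) (Fin k) ℂ) (Ns : Fin k → Matrix (Fin n) (Fin n) ℂ)
    (hM : IsCHadamard M) (hN : ∀ j, IsCHadamard (Ns j))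
    (K : Matrix (Fin k × Fin n) (Fin k × Fin n) ℂ)
    (hK : ∀ (i j : Fin k) (a b : Fin n), K (i, a) (j, b) = M i j * Ns j a b)
    (logK : Matrix (Fin k × Fin n) (Fin k × Fin n) ℝ)
    (hlog : ∀ x y, K x y = Complex.exp (2 * π * Complex.I * (logK x y : ℂ))) :
    ∀ (j : Fin n) (i i' : Fin k) (m : Fin k),
      ∃ c : ℝ, ∀ b : Fin n,
        Int.fract (logK (i, j) (m, b) - logK (i', j) (m, b)) = c := by
  intro j i i' m
  rcases Nat.eq_zero_or_pos n with hn | hn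
  · exact ⟨0, fun b => absurd b.2 (by omega)⟩
  · set b0 : Fin n := ⟨0, hn⟩
    refine ⟨Int.fract (logK (i, j) (m, b0) - logK (i', j) (m, b0)), fun b => ?_⟩
    have key : ∀ b : Fin n,
        Complex.exp (2 * π * Complex.I * ((logK (i, j) (m, b) - logK (i', j) (m, b) : ℝ) : ℂ))
          = M i m / M i' m := by
      intro b
      have hNne : Ns m j b ≠ 0 := by
        intro h
        have := (hN m).1 j b
        rw [h] at this; simp at this
      have hMne : M i' m ≠ 0 := by
        intro h
        have := hM.1 i' m
        rw [h] at this; simp at this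
      have e1 : Complex.exp (2 * π * Complex.I * (logK (i, j) (m, b) : ℂ)) = M i m * Ns m j b := by
        rw [← hlog, hK]
      have e2 : Complex.exp (2 * π * Complex.I * (logK (i', j) (m, b) : ℂ)) = M i' m * Ns m j b := by
        rw [← hlog, hK]
      have : Complex.exp (2 * π * Complex.I * ((logK (i, j) (m, b) - logK (i', j) (m, b) : ℝ) : ℂ))
          = Complex.exp (2 * π * Complex.I * (logK (i, j) (m, b) : ℂ))
            / Complex.exp (2 * π * Complex.I * (logK (i', j) (m, b) : ℂ)) := by
        rw [← Complex.exp_sub]; push_cast; ring_nf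
      rw [this, e1, e2]
      field_simp
    exact fract_eq_of_exp_eq ((key b).trans (key b0).symm)
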